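/- Let g be a parabolic Möbius transformation with finite fixed point and translation vector ω(g) ≠ 0, let g₀(z) = z+1, and define inductively g₁ = g⁻¹ ∘ g₀ ∘ g and gₙ = g_{n-1}⁻¹ ∘ g₀ ∘ g_{n-1}. Then each gₙ is parabolic with |ω(gₙ)| = |ω(g)|^(2ⁿ). -/

import Mathlib

/-- The determinant-one matrix representing the parabolic Möbius transformation
with finite fixed point `P` and translation vector `τ`:
`z ↦ ((1 + τP)z - τP²)/(τz + 1 - τP)`. -/
def mobiusPara (P τ : ℝ) : Matrix (Fin 2) (Fin 2) ℝ :=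
  !![1 + τ * P, -(τ * P ^ 2); τ, 1 - τ * P]

/-- The sequence `g₀ = g`, `gₙ = g_{n-1}⁻¹ ∘ g₀ ∘ g_{n-1}` of iterated conjugates
of the translation `g₀(z) = z + 1`. -/
noncomputable def conjSeq (g : Matrix (Fin 2) (Fin 2) ℝ) : ℕ → Matrix (Fin 2) (Fin 2) ℝ
  | 0 => g
  | n + 1 => (conjSeq g n)⁻¹ * !![1, 1; 0, 1] * conjSeq g n

lemma mobiusPara_inv (Q τ : ℝ) :
    (mobiusPara Q τ)⁻¹ = !![1 - τ * Q, τ * Q ^ 2; -τ, 1 + τ * Q] := by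
  apply Matrix.inv_eq_left_inv
  simp only [mobiusPara, Matrix.mul_fin_two, Matrix.one_fin_two]
  congr 1 <;> ring

lemma mobiusPara_neg_inv (Q τ : ℝ) :
    (-mobiusPara Q τ)⁻¹ = -(mobiusPara Q τ)⁻¹ := by
  rw [mobiusPara_inv]
  apply Matrix.inv_eq_left_inv
  simp only [mobiusPara, Matrix.neg_mul, Matrix.mul_neg, neg_neg, Matrix.mul_fin_two,
    Matrix.one_fin_two]
  congr 1 <;> ring

lemma conj_step (Q τ : ℝ) (hτ : τ ≠ 0) :
    (mobiusPara Q τ)⁻¹ * !![1, 1; 0, 1] * mobiusPara Q τ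
      = mobiusPara (Q - 1 / τ) (-(τ ^ 2)) := by
  rw [mobiusPara_inv]
  ext i j
  fin_cases i <;> fin_cases j <;>
    simp only [mobiusPara, Matrix.mul_apply, Fin.sum_univ_two, Matrix.cons_val', Matrix.cons_val_zero,
      Matrix.cons_val_one, Matrix.head_cons, Matrix.head_fin_const, Matrix.empty_val',
      Matrix.cons_val_fin_one, Matrix.of_apply, Fin.zero_eta, Fin.mk_one] <;>
    field_simp <;> ring

theorem iterated_conjugate_translation_vectors (P ω : ℝ) (hω : ω ≠ 0) :
    ∀ n : ℕ, 1 ≤ n → ∃ Q τ : ℝ, τ ≠ 0 ∧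
      (conjSeq (mobiusPara P ω) n = mobiusPara Q τ ∨
       conjSeq (mobiusPara P ω) n = -mobiusPara Q τ) ∧
      |τ| = |ω| ^ (2 ^ n : ℕ) := by
  intro n hn
  induction n with
  | zero => omega
  | succ m ih =>
    rcases Nat.eq_or_lt_of_le hn with h1 | h1
    · -- m = 0
      have hm : m = 0 := by omega
      subst hm
      refine ⟨P - 1 / ω, -(ω ^ 2), neg_ne_zero.mpr (pow_ne_zero 2 hω), Or.inl ?_, ?_⟩
      · show (mobiusPara P ω)⁻¹ * _ * mobiusPara P ω = _
        exact conj_step P ω hω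
      · rw [abs_neg, abs_pow, pow_one, pow_two]
    · obtain ⟨Q, τ, hτ, hcase, habs⟩ := ih (by omega)
      refine ⟨Q - 1 / τ, -(τ ^ 2), neg_ne_zero.mpr (pow_ne_zero 2 hτ), Or.inl ?_, ?_⟩
      · show (conjSeq (mobiusPara P ω) m)⁻¹ * _ * conjSeq (mobiusPara P ω) m = _
        rcases hcase with h | h
        · rw [h]; exact conj_step Q τ hτ
        · rw [h, mobiusPara_neg_inv, Matrix.neg_mul, Matrix.neg_mul, Matrix.mul_neg, neg_neg]
          exact conj_step Q τ hτ
      · rw [abs_neg, abs_pow, habs, ← pow_mul, pow_succ]
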